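/- Let $\mathcal{S}$ be a family of subsets of a finite universe $U$, let $L \subseteq U$, and let $w : U \to \mathbb{R}_{\ge 0}$ be an assignment of dual values satisfying $\sum_{e \in s} w_e \le 1$ for every $s \in \mathcal{S}$ (dual feasibility over the whole universe), and suppose $\sum_{e \in U} w_e \le (1+\varepsilon) \sum_{e \in L} w_e$. Let $T \subseteq \mathcal{S}$ be a collection of sets each of which is tight, i.e., $\sum_{e \in s} w_e \ge (1+\varepsilon)^{-1}$ for all $s \in T$. If every element of $U$ belongs to at most $f$ sets of $\mathcal{S}$, then $|T| \le (1+\varepsilon)^2 f \cdot \mathrm{OPT}$, where $\mathrm{OPT}$ is the minimum number of sets of $\mathcal{S}$ needed to cover $L$. -/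
import Mathlib


open Finset


lemma sum_biUnion_le_aux {α β : Type*} [DecidableEq α] [DecidableEq β]
    (w : α → ℝ) (hw : ∀ e, 0 ≤ w e) (C : Finset β) (g : β → Finset α) :
    ∑ e ∈ C.biUnion g, w e ≤ ∑ s ∈ C, ∑ e ∈ g s, w e := by
  classical
  induction C using Finset.induction with
  | empty => simp
  | @insert a t hx ih =>
    rw [Finset.biUnion_insert, Finset.sum_insert hx]
    have h1 : ∑ e ∈ (g a ∪ t.biUnion g), w e ≤ ∑ e ∈ g a, w e + ∑ e ∈ t.biUnion g, w e := by
      have := Finset.sum_union_inter (s₁ := g a) (s₂ := t.biUnion g) (f := w)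
      have h2 : 0 ≤ ∑ e ∈ (g a ∩ t.biUnion g), w e := Finset.sum_nonneg fun e _ => hw e
      linarith
    exact h1.trans (add_le_add le_rfl ih)

/-- LP-duality approximation bound for tight sets of an extended dual solution. -/
theorem tight_sets_card_le {α : Type*} [DecidableEq α] (U : Finset α)
    (S : Finset (Finset α)) (L : Finset α) (hL : L ⊆ U) (hSU : ∀ s ∈ S, s ⊆ U)
    (ε : ℝ) (hε : 0 < ε) (w : α → ℝ) (hw0 : ∀ e, 0 ≤ w e)
    (hfeas : ∀ s ∈ S, ∑ e ∈ s, w e ≤ 1)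
    (hUL : ∑ e ∈ U, w e ≤ (1 + ε) * ∑ e ∈ L, w e)
    (T : Finset (Finset α)) (hTS : T ⊆ S)
    (htight : ∀ s ∈ T, (1 + ε)⁻¹ ≤ ∑ e ∈ s, w e)
    (f : ℕ) (hf : ∀ e ∈ U, (S.filter (fun s => e ∈ s)).card ≤ f)
    (OPT : ℕ)
    (hOPT : IsLeast {n : ℕ | ∃ C ⊆ S, (∀ e ∈ L, ∃ s ∈ C, e ∈ s) ∧ C.card = n} OPT) :
    (T.card : ℝ) ≤ (1 + ε) ^ 2 * f * OPT := by
  obtain ⟨⟨C, hCS, hcov, hCcard⟩, -⟩ := hOPT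
  have hεpos : (0:ℝ) < 1 + ε := by linarith
  -- weak duality
  have hdual : ∑ e ∈ L, w e ≤ (OPT : ℝ) := by
    have hLsub : L ⊆ C.biUnion id := by
      intro e he
      obtain ⟨s, hs, hes⟩ := hcov e he
      exact Finset.mem_biUnion.mpr ⟨s, hs, hes⟩
    calc ∑ e ∈ L, w e ≤ ∑ e ∈ C.biUnion id, w e :=
          Finset.sum_le_sum_of_subset_of_nonneg hLsub (fun e _ _ => hw0 e)
      _ ≤ ∑ s ∈ C, ∑ e ∈ s, w e := sum_biUnion_le_aux w hw0 C id
      _ ≤ ∑ s ∈ C, (1:ℝ) := Finset.sum_le_sum (fun s hs => hfeas s (hCS hs))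
      _ = (OPT : ℝ) := by simp [hCcard]
  -- double counting
  have hdouble : ∑ s ∈ T, ∑ e ∈ s, w e ≤ (f : ℝ) * ∑ e ∈ U, w e := by
    have h1 : ∑ s ∈ T, ∑ e ∈ s, w e
        = ∑ e ∈ U, ((T.filter (fun s => e ∈ s)).card : ℝ) * w e := by
      have : ∀ s ∈ T, ∑ e ∈ s, w e = ∑ e ∈ U, if e ∈ s then w e else 0 := by
        intro s hs
        rw [Finset.sum_ite_mem, Finset.inter_eq_right.mpr (hSU s (hTS hs))]
      rw [Finset.sum_congr rfl this, Finset.sum_comm]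
      refine Finset.sum_congr rfl (fun e _ => ?_)
      rw [← Finset.sum_filter, Finset.sum_const, nsmul_eq_mul]
    rw [h1, Finset.mul_sum]
    refine Finset.sum_le_sum (fun e he => ?_)
    refine mul_le_mul_of_nonneg_right ?_ (hw0 e)
    have : (T.filter (fun s => e ∈ s)).card ≤ (S.filter (fun s => e ∈ s)).card :=
      Finset.card_le_card (Finset.filter_subset_filter _ hTS)
    exact_mod_cast this.trans (hf e he)
  -- tightness lower bound
  have hlow : (T.card : ℝ) * (1 + ε)⁻¹ ≤ ∑ s ∈ T, ∑ e ∈ s, w e := by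
    calc (T.card : ℝ) * (1 + ε)⁻¹ = ∑ _s ∈ T, (1 + ε)⁻¹ := by
          rw [Finset.sum_const, nsmul_eq_mul]
      _ ≤ ∑ s ∈ T, ∑ e ∈ s, w e := Finset.sum_le_sum htight
  have hUw : (0:ℝ) ≤ ∑ e ∈ U, w e := Finset.sum_nonneg (fun e _ => hw0 e)
  have hchain : (T.card : ℝ) * (1 + ε)⁻¹ ≤ (f : ℝ) * ((1 + ε) * OPT) := by
    calc (T.card : ℝ) * (1 + ε)⁻¹ ≤ (f : ℝ) * ∑ e ∈ U, w e := hlow.trans hdouble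
      _ ≤ (f : ℝ) * ((1 + ε) * ∑ e ∈ L, w e) := by
          exact mul_le_mul_of_nonneg_left hUL (by positivity)
      _ ≤ (f : ℝ) * ((1 + ε) * OPT) := by
          refine mul_le_mul_of_nonneg_left ?_ (by positivity)
          exact mul_le_mul_of_nonneg_left hdual (le_of_lt hεpos)
  have := mul_le_mul_of_nonneg_left hchain (le_of_lt hεpos)
  rw [mul_comm ((T.card : ℝ)) _, ← mul_assoc, mul_inv_cancel₀ (ne_of_gt hεpos), one_mul] at this
  calc (T.card : ℝ) ≤ (1 + ε) * ((f : ℝ) * ((1 + ε) * OPT)) := this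
    _ = (1 + ε) ^ 2 * f * OPT := by ring
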